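/- Let G be a graph on an even number n ≥ 2 of vertices admitting a bisection S = (S,S̄) such that: every x ∈ S has def(x) ≥ −1, there exist two non-adjacent vertices u, v ∈ S, there is a vertex z ∈ S̄ with def(z) ≤ 0 adjacent to both u and v, and every x ∈ S with def(x) = −1 is adjacent to z. Then G is mbM: the profile assigning preference 1 to z and to S∖{u,v}, and 0 to everyone else, has exactly n/2 − 1 ones (a strict minority); u and v are unhappy and successively flip to 1, after which all n/2 + 1 vertices with preference 1 are not unhappy; hence any reachable stable profile has at least n/2 + 1 vertices with preference 1. -/

import Mathlib

open Finset

variable {V : Type*}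

/-- Number of neighbors of `x` inside the set `A`. -/
def nbrCount [Fintype V] [DecidableEq V] (G : SimpleGraph V) [DecidableRel G.Adj]
    (x : V) (A : Finset V) : ℕ :=
  (A.filter (fun y => G.Adj x y)).card

/-- The width of the partition `(S, Sᶜ)`: the number of crossing edges. -/
def bwidth [Fintype V] [DecidableEq V] (G : SimpleGraph V) [DecidableRel G.Adj]
    (S : Finset V) : ℕ :=
  ∑ x ∈ S, nbrCount G x Sᶜ

/-- Deficiency of a vertex with respect to the partition `(S, Sᶜ)`. -/
def defic [Fintype V] [DecidableEq V] (G : SimpleGraph V) [DecidableRel G.Adj]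
    (S : Finset V) (x : V) : ℤ :=
  if x ∈ S then (nbrCount G x S : ℤ) - (nbrCount G x Sᶜ : ℤ)
  else (nbrCount G x Sᶜ : ℤ) - (nbrCount G x S : ℤ)

/-- `(S, Sᶜ)` is a minimum bisection: `|S| = ⌈n/2⌉` and the width is minimal among
all such partitions. -/
def IsMinBisection [Fintype V] [DecidableEq V] (G : SimpleGraph V) [DecidableRel G.Adj]
    (S : Finset V) : Prop :=
  S.card = (Fintype.card V + 1) / 2 ∧
  ∀ T : Finset V, T.card = S.card → bwidth G S ≤ bwidth G T

/-- A vertex is unhappy if a strict majority of its neighbors hold the opposite preference. -/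
def Unhappy [Fintype V] [DecidableEq V] (G : SimpleGraph V) [DecidableRel G.Adj]
    (s : V → Bool) (x : V) : Prop :=
  (univ.filter (fun y => G.Adj x y ∧ s y = s x)).card <
  (univ.filter (fun y => G.Adj x y ∧ s y ≠ s x)).card

/-- One update step of the majority dynamics: an unhappy vertex flips its preference. -/
def FlipStep [Fintype V] [DecidableEq V] (G : SimpleGraph V) [DecidableRel G.Adj]
    (s t : V → Bool) : Prop :=
  ∃ x, Unhappy G s x ∧ t = Function.update s x (!s x)

/-- Reachability by a (possibly empty) sequence of updates. -/
def ReachesProf [Fintype V] [DecidableEq V] (G : SimpleGraph V) [DecidableRel G.Adj]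
    (s t : V → Bool) : Prop :=
  Relation.ReflTransGen (FlipStep G) s t

/-- A profile is stable if no vertex is unhappy. -/
def StableProf [Fintype V] [DecidableEq V] (G : SimpleGraph V) [DecidableRel G.Adj]
    (s : V → Bool) : Prop :=
  ∀ x, ¬ Unhappy G s x

/-- Number of vertices with preference 1. -/
def onesCount [Fintype V] (s : V → Bool) : ℕ :=
  (univ.filter (fun x => s x = true)).card

/-- Number of vertices with preference 0. -/
def zerosCount [Fintype V] (s : V → Bool) : ℕ :=
  (univ.filter (fun x => s x = false)).card

/-- Minority becomes majority: there is an initial profile with a strict majority of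
0-preferences and a sequence of updates reaching a stable profile in which at most half
of the vertices prefer 0. -/
def MbM [Fintype V] [DecidableEq V] (G : SimpleGraph V) [DecidableRel G.Adj] : Prop :=
  ∃ s₀ : V → Bool, 2 * zerosCount s₀ > Fintype.card V ∧
    ∃ t, ReachesProf G s₀ t ∧ StableProf G t ∧ 2 * zerosCount t ≤ Fintype.card V

section Helpers
set_option linter.unusedSectionVars false
variable [Fintype V] [DecidableEq V] {G : SimpleGraph V} [DecidableRel G.Adj]

lemma cardZ_eq (p : V → Prop) [DecidablePred p] :
    ((univ.filter p).card : ℤ) = ∑ y, (if p y then (1:ℤ) else 0) := by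
  rw [Finset.card_filter]
  push_cast
  rfl

lemma nbrCountZ (x : V) (A : Finset V) :
    (nbrCount G x A : ℤ) = ∑ y, (if y ∈ A ∧ G.Adj x y then (1:ℤ) else 0) := by
  have h : A.filter (fun y => G.Adj x y) = univ.filter (fun y => y ∈ A ∧ G.Adj x y) := by
    ext y; simp
  unfold nbrCount
  rw [h, cardZ_eq]

lemma nbrCountZ_compl (x : V) (S : Finset V) :
    (nbrCount G x Sᶜ : ℤ) = ∑ y, (if y ∉ S ∧ G.Adj x y then (1:ℤ) else 0) := by
  rw [nbrCountZ]
  exact Finset.sum_congr rfl fun y _ => by by_cases h : y ∈ S <;> simp [h]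

lemma defic_mem {S : Finset V} {x : V} (hx : x ∈ S) :
    defic G S x = ∑ y, ((if y ∈ S ∧ G.Adj x y then (1:ℤ) else 0)
      - (if y ∉ S ∧ G.Adj x y then 1 else 0)) := by
  unfold defic
  rw [if_pos hx, nbrCountZ_compl, nbrCountZ, ← Finset.sum_sub_distrib]

lemma defic_not_mem {S : Finset V} {x : V} (hx : x ∉ S) :
    defic G S x = ∑ y, ((if y ∉ S ∧ G.Adj x y then (1:ℤ) else 0)
      - (if y ∈ S ∧ G.Adj x y then 1 else 0)) := by
  unfold defic
  rw [if_neg hx, nbrCountZ_compl, nbrCountZ, ← Finset.sum_sub_distrib]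

lemma unhappy_iff (s : V → Bool) (x : V) :
    Unhappy G s x ↔ 0 < ∑ y, ((if G.Adj x y ∧ s y ≠ s x then (1:ℤ) else 0)
      - (if G.Adj x y ∧ s y = s x then (1:ℤ) else 0)) := by
  rw [Finset.sum_sub_distrib, ← cardZ_eq, ← cardZ_eq, sub_pos, Nat.cast_lt]
  exact Iff.rfl

lemma ones_add_zeros (s : V → Bool) :
    onesCount s + zerosCount s = Fintype.card V := by
  have h := Finset.card_filter_add_card_filter_not
    (s := (univ : Finset V)) (p := fun x => s x = true)
  rw [Finset.card_univ] at h
  unfold onesCount zerosCount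
  rw [← h]
  congr 1
  congr 1
  apply Finset.filter_congr
  intro y _
  simp

end Helpers

section Helpers2
set_option linter.unusedSectionVars false
variable [Fintype V] [DecidableEq V] {G : SimpleGraph V} [DecidableRel G.Adj]

lemma good_step (s : V → Bool) (hg : ∀ w, s w = true → ¬ Unhappy G s w)
    (x : V) (hx : Unhappy G s x) :
    s x = false ∧
      (∀ w, Function.update s x true w = true →
        ¬ Unhappy G (Function.update s x true) w) ∧
      onesCount (Function.update s x true) = onesCount s + 1 := by
  have hsx : s x = false := by
    cases h : s x
    · rfl
    · exact absurd hx (hg x h)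
  set t := Function.update s x true with ht
  have htx : t x = true := Function.update_self x true s
  have htne : ∀ y, y ≠ x → t y = s y := fun y hy => Function.update_of_ne hy true s
  refine ⟨hsx, ?_, ?_⟩
  · intro w hw
    by_cases hwx : w = x
    · subst hwx
      intro hun
      unfold Unhappy at hun hx
      have h1 : univ.filter (fun y => G.Adj w y ∧ t y = t w)
          = univ.filter (fun y => G.Adj w y ∧ s y ≠ s w) := by
        apply Finset.filter_congr
        intro y _
        constructor
        · rintro ⟨hadj, h⟩
          have hyx : y ≠ w := fun he => G.loopless.irrefl w (he ▸ hadj)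
          rw [htne y hyx, htx] at h
          refine ⟨hadj, ?_⟩
          rw [h, hsx]
          simp
        · rintro ⟨hadj, h⟩
          have hyx : y ≠ w := fun he => G.loopless.irrefl w (he ▸ hadj)
          rw [hsx] at h
          have hsy : s y = true := by
            cases hsy : s y
            · exact absurd hsy h
            · rfl
          exact ⟨hadj, by rw [htne y hyx, hsy, htx]⟩
      have h2 : univ.filter (fun y => G.Adj w y ∧ t y ≠ t w)
          = univ.filter (fun y => G.Adj w y ∧ s y = s w) := by
        apply Finset.filter_congr
        intro y _
        constructor
        · rintro ⟨hadj, h⟩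
          have hyx : y ≠ w := fun he => G.loopless.irrefl w (he ▸ hadj)
          rw [htne y hyx, htx] at h
          have hsy : s y = false := by
            cases hsy : s y
            · rfl
            · exact absurd hsy h
          exact ⟨hadj, by rw [hsy, hsx]⟩
        · rintro ⟨hadj, h⟩
          have hyx : y ≠ w := fun he => G.loopless.irrefl w (he ▸ hadj)
          rw [hsx] at h
          refine ⟨hadj, ?_⟩
          rw [htne y hyx, h, htx]
          simp
      rw [h1, h2] at hun
      exact lt_asymm hx hun
    · have hsw : s w = true := by rw [← htne w hwx]; exact hw
      intro hun
      apply hg w hsw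
      unfold Unhappy at hun ⊢
      have hsub1 : univ.filter (fun y => G.Adj w y ∧ s y = s w) ⊆
          univ.filter (fun y => G.Adj w y ∧ t y = t w) := by
        apply Finset.monotone_filter_right
        rintro y - ⟨hadj, hy⟩
        refine ⟨hadj, ?_⟩
        rw [htne w hwx, hsw]
        by_cases hyx : y = x
        · rw [hyx, htx]
        · rw [htne y hyx, hy, hsw]
      have hsub2 : univ.filter (fun y => G.Adj w y ∧ t y ≠ t w) ⊆
          univ.filter (fun y => G.Adj w y ∧ s y ≠ s w) := by
        apply Finset.monotone_filter_right
        rintro y - ⟨hadj, hy⟩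
        rw [htne w hwx, hsw] at hy
        refine ⟨hadj, ?_⟩
        rw [hsw]
        by_cases hyx : y = x
        · rw [hyx, htx] at hy; exact absurd rfl hy
        · rw [htne y hyx] at hy; exact hy
      exact lt_of_le_of_lt (Finset.card_le_card hsub1)
        (lt_of_lt_of_le hun (Finset.card_le_card hsub2))
  · unfold onesCount
    have heq : univ.filter (fun y => t y = true)
        = insert x (univ.filter (fun y => s y = true)) := by
      ext y
      simp only [Finset.mem_filter, Finset.mem_insert, Finset.mem_univ, true_and]
      by_cases hyx : y = x
      · subst hyx; simp [htx]
      · rw [htne y hyx]; simp [hyx]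
    rw [heq, Finset.card_insert_of_notMem]
    simp [hsx]

lemma reach_stable (k : ℕ) : ∀ s : V → Bool,
    (∀ w, s w = true → ¬ Unhappy G s w) →
    Fintype.card V ≤ onesCount s + k →
    ∃ t, ReachesProf G s t ∧ StableProf G t ∧ onesCount s ≤ onesCount t := by
  induction k with
  | zero =>
    intro s hg hk
    have hall : ∀ w, s w = true := by
      have hle : onesCount s ≤ Fintype.card V := by
        unfold onesCount
        exact (Finset.card_filter_le _ _).trans (le_of_eq Finset.card_univ)
      have hceq : (univ.filter (fun x => s x = true)).card = Fintype.card V := by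
        unfold onesCount at hk hle; omega
      have huniv := Finset.eq_univ_of_card _ hceq
      intro w
      have : w ∈ univ.filter (fun x => s x = true) := by
        rw [huniv]; exact Finset.mem_univ w
      exact (Finset.mem_filter.1 this).2
    exact ⟨s, Relation.ReflTransGen.refl, fun x => hg x (hall x), le_rfl⟩
  | succ k ih =>
    intro s hg hk
    by_cases hst : StableProf G s
    · exact ⟨s, Relation.ReflTransGen.refl, hst, le_rfl⟩
    · unfold StableProf at hst
      push_neg at hst
      obtain ⟨x, hx⟩ := hst
      obtain ⟨hsx, hg', hones⟩ := good_step s hg x hx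
      have hstep : FlipStep G s (Function.update s x true) :=
        ⟨x, hx, by rw [hsx]; rfl⟩
      obtain ⟨t, hr, hstab, hle⟩ := ih _ hg' (by omega)
      exact ⟨t, Relation.ReflTransGen.head hstep hr, hstab, by omega⟩

end Helpers2

/-- M1 bisections: an even-order graph with a bisection in which all
S-deficiencies are ≥ −1, S contains two non-adjacent vertices u, v both adjacent to a
vertex z ∈ S̄ with deficiency ≤ 0, and every deficiency −1 vertex of S is adjacent to z,
is mbM. -/
theorem stmt16 [Fintype V] [DecidableEq V] (G : SimpleGraph V) [DecidableRel G.Adj]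
    (heven : Even (Fintype.card V))
    (S : Finset V) (hcard : S.card = Fintype.card V / 2)
    (hdefS : ∀ x ∈ S, -1 ≤ defic G S x)
    (u v : V) (hu : u ∈ S) (hv : v ∈ S) (huv : u ≠ v) (hnadj : ¬ G.Adj u v)
    (z : V) (hz : z ∉ S) (hdz : defic G S z ≤ 0)
    (hzu : G.Adj z u) (hzv : G.Adj z v)
    (hm1 : ∀ x ∈ S, defic G S x = -1 → G.Adj x z) :
    MbM G := by
  obtain ⟨m, hm⟩ := heven
  have hcardm : S.card = m := by omega
  have hpair : ({u, v} : Finset V) ⊆ S := by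
    intro y hy
    rcases Finset.mem_insert.1 hy with rfl | hy
    · exact hu
    · rw [Finset.mem_singleton] at hy; exact hy ▸ hv
  have hm2 : 2 ≤ S.card := by
    calc 2 = ({u, v} : Finset V).card := (Finset.card_pair huv).symm
      _ ≤ S.card := Finset.card_le_card hpair
  -- the profiles
  set s0 : V → Bool := fun y => decide (y = z ∨ (y ∈ S ∧ y ≠ u ∧ y ≠ v)) with hs0def
  set s2 : V → Bool := fun y => decide (y ∈ S ∨ y = z) with hs2def
  set s1 : V → Bool := Function.update s0 u true with hs1def
  have hs0spec : ∀ y, s0 y = true ↔ (y = z ∨ (y ∈ S ∧ y ≠ u ∧ y ≠ v)) := by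
    intro y; simp only [hs0def, decide_eq_true_eq]
  have hs0spec' : ∀ y, s0 y = false ↔ ¬(y = z ∨ (y ∈ S ∧ y ≠ u ∧ y ≠ v)) := by
    intro y; simp only [hs0def, decide_eq_false_iff_not]
  have hs2spec : ∀ y, s2 y = true ↔ (y ∈ S ∨ y = z) := by
    intro y; simp only [hs2def, decide_eq_true_eq]
  have hs2spec' : ∀ y, s2 y = false ↔ ¬(y ∈ S ∨ y = z) := by
    intro y; simp only [hs2def, decide_eq_false_iff_not]
  have hs0u : s0 u = false := (hs0spec' u).2 (by
    rintro (rfl | ⟨-, h, -⟩)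
    · exact hz hu
    · exact h rfl)
  have hs0v : s0 v = false := (hs0spec' v).2 (by
    rintro (rfl | ⟨-, -, h⟩)
    · exact hz hv
    · exact h rfl)
  have hs0z : s0 z = true := (hs0spec z).2 (Or.inl rfl)
  have huz : u ≠ z := fun h => hz (h ▸ hu)
  have hvz : v ≠ z := fun h => hz (h ▸ hv)
  have hs1v : s1 v = false := by
    rw [hs1def, Function.update_of_ne huv.symm]; exact hs0v
  have hs1z : s1 z = true := by
    rw [hs1def, Function.update_of_ne (Ne.symm huz)]; exact hs0z
  have hs1u : s1 u = true := by rw [hs1def]; exact Function.update_self u true s0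
  have hAdjuz : G.Adj u z := hzu.symm
  have hAdjvz : G.Adj v z := hzv.symm
  have hs2z : s2 z = true := (hs2spec z).2 (Or.inr rfl)
  -- u is unhappy in s0
  have hUu : Unhappy G s0 u := by
    rw [unhappy_iff]
    have hE : (-1:ℤ) ≤ ∑ y, ((if y ∈ S ∧ G.Adj u y then (1:ℤ) else 0)
        - (if y ∉ S ∧ G.Adj u y then 1 else 0)) := by
      rw [← defic_mem hu]; exact hdefS u hu
    have key : ∀ y : V, ((if G.Adj u y ∧ s0 y ≠ s0 u then (1:ℤ) else 0)
        - (if G.Adj u y ∧ s0 y = s0 u then (1:ℤ) else 0))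
        = ((if y ∈ S ∧ G.Adj u y then (1:ℤ) else 0)
          - (if y ∉ S ∧ G.Adj u y then 1 else 0)) + (if y = z then 2 else 0) := by
      intro y
      by_cases hyz : y = z
      · subst hyz
        simp [hAdjuz, hs0z, hs0u, hz]
      · by_cases hadj : G.Adj u y
        · by_cases hyS : y ∈ S
          · have hs0y : s0 y = true := (hs0spec y).2
              (Or.inr ⟨hyS, (G.ne_of_adj hadj).symm, fun h => hnadj (h ▸ hadj)⟩)
            simp [hadj, hyS, hs0y, hs0u, hyz]
          · have hs0y : s0 y = false := (hs0spec' y).2 (by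
              rintro (rfl | ⟨h, -, -⟩)
              · exact hyz rfl
              · exact hyS h)
            simp [hadj, hyS, hs0y, hs0u, hyz]
        · simp [hadj, hyz]
    rw [Finset.sum_congr rfl fun y _ => key y, Finset.sum_add_distrib,
      Finset.sum_ite_eq' univ z (fun _ => (2:ℤ))]
    simp only [Finset.mem_univ, if_true]
    linarith
  -- v is unhappy in s1
  have hUv : Unhappy G s1 v := by
    rw [unhappy_iff]
    have hE : (-1:ℤ) ≤ ∑ y, ((if y ∈ S ∧ G.Adj v y then (1:ℤ) else 0)
        - (if y ∉ S ∧ G.Adj v y then 1 else 0)) := by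
      rw [← defic_mem hv]; exact hdefS v hv
    have key : ∀ y : V, ((if G.Adj v y ∧ s1 y ≠ s1 v then (1:ℤ) else 0)
        - (if G.Adj v y ∧ s1 y = s1 v then (1:ℤ) else 0))
        = ((if y ∈ S ∧ G.Adj v y then (1:ℤ) else 0)
          - (if y ∉ S ∧ G.Adj v y then 1 else 0)) + (if y = z then 2 else 0) := by
      intro y
      by_cases hyz : y = z
      · subst hyz
        simp [hAdjvz, hs1z, hs1v, hz]
      · by_cases hadj : G.Adj v y
        · have hyu : y ≠ u := by
            rintro rfl
            exact hnadj hadj.symm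
          have hs1y : s1 y = s0 y := by rw [hs1def, Function.update_of_ne hyu]
          by_cases hyS : y ∈ S
          · have hs0y : s0 y = true := (hs0spec y).2
              (Or.inr ⟨hyS, hyu, (G.ne_of_adj hadj).symm⟩)
            simp [hadj, hyS, hs1y, hs0y, hs1v, hyz]
          · have hs0y : s0 y = false := (hs0spec' y).2 (by
              rintro (rfl | ⟨h, -, -⟩)
              · exact hyz rfl
              · exact hyS h)
            simp [hadj, hyS, hs1y, hs0y, hs1v, hyz]
        · simp [hadj, hyz]
    rw [Finset.sum_congr rfl fun y _ => key y, Finset.sum_add_distrib,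
      Finset.sum_ite_eq' univ z (fun _ => (2:ℤ))]
    simp only [Finset.mem_univ, if_true]
    linarith
  -- s2 is an update of s1
  have hs2eq : s2 = Function.update s1 v true := by
    funext y
    by_cases hyv : y = v
    · subst hyv
      rw [Function.update_self]
      exact (hs2spec y).2 (Or.inl hv)
    · rw [Function.update_of_ne hyv]
      by_cases hyu : y = u
      · subst hyu
        rw [hs1u]
        exact (hs2spec y).2 (Or.inl hu)
      · rw [hs1def, Function.update_of_ne hyu]
        by_cases hyz : y = z
        · subst hyz; rw [hs0z, hs2z]
        · by_cases hyS : y ∈ S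
          · rw [(hs0spec y).2 (Or.inr ⟨hyS, hyu, hyv⟩), (hs2spec y).2 (Or.inl hyS)]
          · rw [(hs0spec' y).2 (by rintro (rfl | ⟨h, -, -⟩); exacts [hyz rfl, hyS h]),
              (hs2spec' y).2 (by rintro (h | rfl); exacts [hyS h, hyz rfl])]
  -- all 1-vertices of s2 are happy
  have hGood : ∀ w, s2 w = true → ¬ Unhappy G s2 w := by
    intro w hw hun
    rw [unhappy_iff] at hun
    rcases (hs2spec w).1 hw with hwS | hwz
    · have hE : defic G S w = ∑ y, ((if y ∈ S ∧ G.Adj w y then (1:ℤ) else 0)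
          - (if y ∉ S ∧ G.Adj w y then 1 else 0)) := defic_mem hwS
      have key : ∀ y : V, ((if G.Adj w y ∧ s2 y ≠ s2 w then (1:ℤ) else 0)
          - (if G.Adj w y ∧ s2 y = s2 w then (1:ℤ) else 0))
          = -((if y ∈ S ∧ G.Adj w y then (1:ℤ) else 0)
            - (if y ∉ S ∧ G.Adj w y then 1 else 0))
            + (if y = z then (if G.Adj w z then (-2:ℤ) else 0) else 0) := by
        intro y
        by_cases hyz : y = z
        · subst hyz
          by_cases hadj : G.Adj w y
          · simp [hadj, hs2z, hw, hz]
          · simp [hadj, hz]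
        · by_cases hadj : G.Adj w y
          · by_cases hyS : y ∈ S
            · have : s2 y = true := (hs2spec y).2 (Or.inl hyS)
              simp [hadj, hyS, this, hw, hyz]
            · have : s2 y = false := (hs2spec' y).2 (by
                rintro (h | rfl)
                · exact hyS h
                · exact hyz rfl)
              simp [hadj, hyS, this, hw, hyz]
          · simp [hadj, hyz]
      rw [Finset.sum_congr rfl fun y _ => key y, Finset.sum_add_distrib,
        Finset.sum_ite_eq' univ z (fun _ => if G.Adj w z then (-2:ℤ) else 0),
        Finset.sum_neg_distrib, ← hE] at hun
      simp only [Finset.mem_univ, if_true] at hun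
      have hE1 := hdefS w hwS
      by_cases hadj : G.Adj w z
      · rw [if_pos hadj] at hun; linarith
      · rw [if_neg hadj] at hun
        have : defic G S w = -1 := le_antisymm (by linarith) hE1
        exact hadj (hm1 w hwS this)
    · -- w = z
      subst hwz
      have hE : defic G S w = ∑ y, ((if y ∉ S ∧ G.Adj w y then (1:ℤ) else 0)
          - (if y ∈ S ∧ G.Adj w y then 1 else 0)) := defic_not_mem hz
      have key : ∀ y : V, ((if G.Adj w y ∧ s2 y ≠ s2 w then (1:ℤ) else 0)
          - (if G.Adj w y ∧ s2 y = s2 w then (1:ℤ) else 0))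
          = ((if y ∉ S ∧ G.Adj w y then (1:ℤ) else 0)
            - (if y ∈ S ∧ G.Adj w y then 1 else 0)) := by
        intro y
        by_cases hadj : G.Adj w y
        · by_cases hyS : y ∈ S
          · have : s2 y = true := (hs2spec y).2 (Or.inl hyS)
            simp [hadj, hyS, this, hs2z]
          · have hyz : y ≠ w := fun h => G.loopless.irrefl w (h ▸ hadj)
            have : s2 y = false := (hs2spec' y).2 (by
              rintro (h | rfl)
              · exact hyS h
              · exact hyz rfl)
            simp [hadj, hyS, this, hs2z]
        · simp [hadj]
      rw [Finset.sum_congr rfl fun y _ => key y, ← hE] at hun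
      linarith
  -- counting s2
  have hS2card : onesCount s2 = S.card + 1 := by
    unfold onesCount
    have heq : univ.filter (fun y => s2 y = true) = insert z S := by
      ext y
      simp only [Finset.mem_filter, Finset.mem_univ, true_and, Finset.mem_insert]
      rw [hs2spec y]
      tauto
    rw [heq, Finset.card_insert_of_notMem hz]
  -- counting s0
  have hS0card : onesCount s0 = S.card - 2 + 1 := by
    unfold onesCount
    have heq : univ.filter (fun y => s0 y = true) = insert z (S \ {u, v}) := by
      ext y
      simp only [Finset.mem_filter, Finset.mem_univ, true_and, Finset.mem_insert,
        Finset.mem_sdiff, Finset.mem_insert, Finset.mem_singleton]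
      rw [hs0spec y]
      constructor
      · rintro (rfl | ⟨h1, h2, h3⟩)
        · exact Or.inl rfl
        · exact Or.inr ⟨h1, by tauto⟩
      · rintro (rfl | ⟨h1, h2⟩)
        · exact Or.inl rfl
        · exact Or.inr ⟨h1, fun h => h2 (Or.inl h), fun h => h2 (Or.inr h)⟩
    have hznmem : z ∉ S \ ({u, v} : Finset V) := fun h => hz (Finset.mem_sdiff.1 h).1
    rw [heq, Finset.card_insert_of_notMem hznmem, Finset.card_sdiff_of_subset hpair,
      Finset.card_pair huv]
  -- the flips
  have hstep1 : FlipStep G s0 s1 := ⟨u, hUu, by rw [hs1def, hs0u]; rfl⟩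
  have hstep2 : FlipStep G s1 s2 := ⟨v, hUv, by rw [hs2eq, hs1v]; rfl⟩
  -- assemble
  obtain ⟨t, hrt, hstab, hle⟩ := reach_stable (Fintype.card V) s2 hGood
    (Nat.le_add_left _ _)
  refine ⟨s0, ?_, t, ?_, hstab, ?_⟩
  · have h0 := ones_add_zeros s0
    omega
  · exact Relation.ReflTransGen.head hstep1 (Relation.ReflTransGen.head hstep2 hrt)
  · have h1 := ones_add_zeros t
    omega
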